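/- Let ρ_s, λ̄, λ, c₁, c₂ > 0 and π₁, π₂, σ₀, w₀, α₁₀, m₁₀, q₁₀, m₂₀, q₂₀ ∈ ℝ with m₁₀ ≠ 0 and m₂₀ ≠ 0. Suppose the real numbers w_R, m_{1L}, m_{2L}, q_{1L}, q_{2L} with m_{1L} ≠ 0 and m_{2L} ≠ 0 satisfy (E1) w_R m_{1L} = q_{1L}, (E2) w_R m_{2L} = q_{2L}, and (E7) −σ₀ + λ̄ ρ_s (w₀ − w_R) = Σ_{k=1,2} [λ(q_{kL} − q_{k0}) + q_{k0}²/m_{k0} + c_k² m_{k0} − π_k α_{k0} − q_{kL}²/m_{kL}] where α₂₀ = 1 − α₁₀. Then b₂ q_{2L}² + b₁ q_{2L} + b₀ = 0, where b₂ = −(m_{1L} + m_{2L}) m₂₀ m₁₀, b₁ = (λ̄ ρ_s + λ m_{2L} + λ m_{1L}) m₁₀ m_{2L} m₂₀, and b₀ = (((−π₁ + π₂) α₁₀ − (q₁₀ + q₂₀) λ − w₀ ρ_s λ̄ + σ₀ − π₂) m_{2L} m₂₀ + q₂₀² m_{2L} + m_{2L} c₂² m₂₀²) m₁₀ m_{2L}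 + (m₁₀² c₁² + q₁₀²) m_{2L}² m₂₀. -/

import Mathlib

/-- Step 5 of the Riemann solver: the velocity couplings (E1), (E2) and the
combined stress–pressure coupling (E7) imply the quadratic equation
`b₂ q₂L² + b₁ q₂L + b₀ = 0` for the phasic momentum `q₂L`, with the explicit
coefficients from the appendix of the paper. -/
theorem riemann_solver_quadratic
    (ρs lamBar lam c1 c2 : ℝ)
    (hρ : 0 < ρs) (hlb : 0 < lamBar) (hl : 0 < lam)
    (hc1 : 0 < c1) (hc2 : 0 < c2)
    (π1 π2 σ0 w0 α10 m10 q10 m20 q20 : ℝ)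
    (hm10 : m10 ≠ 0) (hm20 : m20 ≠ 0)
    (wR m1L m2L q1L q2L : ℝ)
    (hm1L : m1L ≠ 0) (hm2L : m2L ≠ 0)
    (hE1 : wR * m1L = q1L)
    (hE2 : wR * m2L = q2L)
    (hE7 : -σ0 + lamBar * ρs * (w0 - wR) =
        (lam * (q1L - q10) + q10 ^ 2 / m10 + c1 ^ 2 * m10 - π1 * α10
            - q1L ^ 2 / m1L)
        + (lam * (q2L - q20) + q20 ^ 2 / m20 + c2 ^ 2 * m20 - π2 * (1 - α10)
            - q2L ^ 2 / m2L))
    (b2 b1 b0 : ℝ)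
    (hb2 : b2 = -(m1L + m2L) * m20 * m10)
    (hb1 : b1 = (lamBar * ρs + lam * m2L + lam * m1L) * m10 * m2L * m20)
    (hb0 : b0 = (((-π1 + π2) * α10 - (q10 + q20) * lam - w0 * ρs * lamBar
            + σ0 - π2) * m2L * m20 + q20 ^ 2 * m2L + m2L * c2 ^ 2 * m20 ^ 2)
          * m10 * m2L
        + (m10 ^ 2 * c1 ^ 2 + q10 ^ 2) * m2L ^ 2 * m20) :
    b2 * q2L ^ 2 + b1 * q2L + b0 = 0 := by
  subst hE1 hE2
  field_simp at hE7
  have key : m1L * (b2 * (wR * m2L) ^ 2 + b1 * (wR * m2L) + b0) = 0 := by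
    subst hb2 hb1 hb0
    linear_combination (-(m1L * m2L ^ 2)) * hE7
  exact (mul_eq_zero.mp key).resolve_left hm1L
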